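/- arXiv:2605.24232 — 5 statements merged into one kernel-verified Lean document; each statement's English description precedes it below -/
import Mathlib

section
/- Let I = [a₀, b₀] and J = [c₀, d₀] be compact intervals, let f₀, f₁ be probability densities on I (measurable, nonnegative, with ∫_I f_i = 1) and let g₀, g₁ be probability densities on J satisfying g₀, g₁ ≥ ε on J for some ε > 0. Define the cumulative distribution functions F_i(x) = ∫_{a₀}^x f_i(s) ds for x ∈ I and G_i(y) = ∫_{c₀}^y g_i(s) ds for y ∈ J. Then for every x ∈ I and every y₀, y₁ ∈ J with G₀(y₀) = F₀(x) and G₁(y₁) = F₁(x), one has |y₁ − y₀| ≤ (1/ε)·( ∫_I |f₁ − f₀| + ∫_J |g₁ − g₀| ). -/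
open MeasureTheory intervalIntegral

private lemma aux_int {c d u v : ℝ} {g : ℝ → ℝ}
    (hgi : IntegrableOn g (Set.Icc c d)) (hu : u ∈ Set.Icc c d) (hv : v ∈ Set.Icc c d) :
    IntervalIntegrable g volume u v :=
  (hgi.mono_set (Set.uIcc_subset_Icc hu hv)).intervalIntegrable

private lemma aux_lower {c d u v ε : ℝ} {g : ℝ → ℝ} (hε : 0 < ε)
    (hgi : IntegrableOn g (Set.Icc c d)) (hgε : ∀ y ∈ Set.Icc c d, ε ≤ g y)
    (hu : u ∈ Set.Icc c d) (hv : v ∈ Set.Icc c d) (huv : u ≤ v) :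
    ε * (v - u) ≤ ∫ s in u..v, g s := by
  have h1 : (∫ s in u..v, (ε : ℝ)) ≤ ∫ s in u..v, g s := by
    apply intervalIntegral.integral_mono_on huv (intervalIntegrable_const) (aux_int hgi hu hv)
    intro y hy
    exact hgε y ⟨le_trans hu.1 hy.1, le_trans hy.2 hv.2⟩
  simpa [mul_comm] using h1

/-- **one-dimensional stability of optimal transport maps.**
Let `I = [a₀, b₀]`, `J = [c₀, d₀]`, let `f₀, f₁` be probability densities on `I` and
`g₀, g₁` probability densities on `J` with `g₀, g₁ ≥ ε > 0` on `J`.  With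
`Fᵢ(x) = ∫_{a₀}^x fᵢ` and `Gᵢ(y) = ∫_{c₀}^y gᵢ`, if `G₀(y₀) = F₀(x)` and
`G₁(y₁) = F₁(x)` for `x ∈ I`, `y₀, y₁ ∈ J`, then
`|y₁ - y₀| ≤ (1/ε)(∫_I |f₁ - f₀| + ∫_J |g₁ - g₀|)`. -/
theorem stmt2 (a₀ b₀ c₀ d₀ ε : ℝ) (hab : a₀ ≤ b₀) (hcd : c₀ ≤ d₀) (hε : 0 < ε)
    (f₀ f₁ g₀ g₁ : ℝ → ℝ)
    (hf₀m : Measurable f₀) (hf₁m : Measurable f₁) (hg₀m : Measurable g₀) (hg₁m : Measurable g₁)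
    (hf₀i : IntegrableOn f₀ (Set.Icc a₀ b₀)) (hf₁i : IntegrableOn f₁ (Set.Icc a₀ b₀))
    (hg₀i : IntegrableOn g₀ (Set.Icc c₀ d₀)) (hg₁i : IntegrableOn g₁ (Set.Icc c₀ d₀))
    (hf₀nn : ∀ x ∈ Set.Icc a₀ b₀, 0 ≤ f₀ x) (hf₁nn : ∀ x ∈ Set.Icc a₀ b₀, 0 ≤ f₁ x)
    (hf₀1 : (∫ s in a₀..b₀, f₀ s) = 1) (hf₁1 : (∫ s in a₀..b₀, f₁ s) = 1)
    (hg₀1 : (∫ s in c₀..d₀, g₀ s) = 1) (hg₁1 : (∫ s in c₀..d₀, g₁ s) = 1)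
    (hg₀ε : ∀ y ∈ Set.Icc c₀ d₀, ε ≤ g₀ y) (hg₁ε : ∀ y ∈ Set.Icc c₀ d₀, ε ≤ g₁ y) :
    ∀ x ∈ Set.Icc a₀ b₀, ∀ y₀ ∈ Set.Icc c₀ d₀, ∀ y₁ ∈ Set.Icc c₀ d₀,
      (∫ s in c₀..y₀, g₀ s) = (∫ s in a₀..x, f₀ s) →
      (∫ s in c₀..y₁, g₁ s) = (∫ s in a₀..x, f₁ s) →
      |y₁ - y₀| ≤ (1 / ε) *
        ((∫ s in a₀..b₀, |f₁ s - f₀ s|) + ∫ s in c₀..d₀, |g₁ s - g₀ s|) := by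
  intro x hx y₀ hy₀ y₁ hy₁ h0 h1
  set A := ∫ s in a₀..b₀, |f₁ s - f₀ s| with hA
  set B := ∫ s in c₀..d₀, |g₁ s - g₀ s| with hB
  have haI : a₀ ∈ Set.Icc a₀ b₀ := ⟨le_refl _, hab⟩
  have hbI : b₀ ∈ Set.Icc a₀ b₀ := ⟨hab, le_refl _⟩
  have hcJ : c₀ ∈ Set.Icc c₀ d₀ := ⟨le_refl _, hcd⟩
  have hdJ : d₀ ∈ Set.Icc c₀ d₀ := ⟨hcd, le_refl _⟩
  -- integrability of differences
  have hfd : IntegrableOn (fun s => f₁ s - f₀ s) (Set.Icc a₀ b₀) := hf₁i.sub hf₀i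
  have hgd : IntegrableOn (fun s => g₁ s - g₀ s) (Set.Icc c₀ d₀) := hg₁i.sub hg₀i
  have hfda : IntegrableOn (fun s => |f₁ s - f₀ s|) (Set.Icc a₀ b₀) := hfd.abs
  have hgda : IntegrableOn (fun s => |g₁ s - g₀ s|) (Set.Icc c₀ d₀) := hgd.abs
  -- Step A : |F₁(x) - F₀(x)| ≤ A
  have hF : |(∫ s in a₀..x, f₁ s) - (∫ s in a₀..x, f₀ s)| ≤ A := by
    have he : (∫ s in a₀..x, f₁ s) - (∫ s in a₀..x, f₀ s)
        = ∫ s in a₀..x, (f₁ s - f₀ s) :=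
      (intervalIntegral.integral_sub (aux_int hf₁i haI hx) (aux_int hf₀i haI hx)).symm
    rw [he]
    calc |∫ s in a₀..x, (f₁ s - f₀ s)| ≤ ∫ s in a₀..x, |f₁ s - f₀ s| :=
          intervalIntegral.abs_integral_le_integral_abs hx.1
      _ ≤ A := by
          apply intervalIntegral.integral_mono_interval (le_refl a₀) hx.1 hx.2
          · filter_upwards with s using abs_nonneg _
          · exact aux_int hfda haI hbI
  -- Step B : |G₁(y₀) - G₀(y₀)| ≤ B
  have hG : |(∫ s in c₀..y₀, g₁ s) - (∫ s in c₀..y₀, g₀ s)| ≤ B := by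
    have he : (∫ s in c₀..y₀, g₁ s) - (∫ s in c₀..y₀, g₀ s)
        = ∫ s in c₀..y₀, (g₁ s - g₀ s) :=
      (intervalIntegral.integral_sub (aux_int hg₁i hcJ hy₀) (aux_int hg₀i hcJ hy₀)).symm
    rw [he]
    calc |∫ s in c₀..y₀, (g₁ s - g₀ s)| ≤ ∫ s in c₀..y₀, |g₁ s - g₀ s| :=
          intervalIntegral.abs_integral_le_integral_abs hy₀.1
      _ ≤ B := by
          apply intervalIntegral.integral_mono_interval (le_refl c₀) hy₀.1 hy₀.2
          · filter_upwards with s using abs_nonneg _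
          · exact aux_int hgda hcJ hdJ
  -- Step C : ε * |y₁ - y₀| ≤ |∫ y₀..y₁ g₁|
  have hC : ε * |y₁ - y₀| ≤ |∫ s in y₀..y₁, g₁ s| := by
    rcases le_total y₀ y₁ with h | h
    · have := aux_lower hε hg₁i hg₁ε hy₀ hy₁ h
      have hnn : (0:ℝ) ≤ ε * (y₁ - y₀) := mul_nonneg hε.le (by linarith)
      rw [abs_of_nonneg (by linarith), abs_of_nonneg (by linarith)]
      exact this
    · have := aux_lower hε hg₁i hg₁ε hy₁ hy₀ h
      have : ε * (y₀ - y₁) ≤ -∫ s in y₀..y₁, g₁ s := by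
        rwa [intervalIntegral.integral_symm] at this
      rw [abs_of_nonpos (by linarith)]
      calc ε * -(y₁ - y₀) = ε * (y₀ - y₁) := by ring
        _ ≤ -∫ s in y₀..y₁, g₁ s := this
        _ ≤ |∫ s in y₀..y₁, g₁ s| := neg_le_abs _
  -- the interval integral identity
  have hid : (∫ s in y₀..y₁, g₁ s)
      = (∫ s in c₀..y₁, g₁ s) - (∫ s in c₀..y₀, g₁ s) :=
    (intervalIntegral.integral_interval_sub_left (aux_int hg₁i hcJ hy₁)
      (aux_int hg₁i hcJ hy₀)).symm
  -- combine
  have key : ε * |y₁ - y₀| ≤ A + B := by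
    have : (∫ s in y₀..y₁, g₁ s)
        = ((∫ s in a₀..x, f₁ s) - (∫ s in a₀..x, f₀ s))
          + ((∫ s in c₀..y₀, g₀ s) - (∫ s in c₀..y₀, g₁ s)) := by
      rw [hid, h1, h0]; ring
    calc ε * |y₁ - y₀| ≤ |∫ s in y₀..y₁, g₁ s| := hC
      _ ≤ |(∫ s in a₀..x, f₁ s) - (∫ s in a₀..x, f₀ s)|
          + |(∫ s in c₀..y₀, g₀ s) - (∫ s in c₀..y₀, g₁ s)| := by
          rw [this]; exact abs_add_le _ _
      _ ≤ A + B := by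
          have := hG
          rw [abs_sub_comm] at this
          exact add_le_add hF this
  rw [one_div, mul_comm, ← div_eq_mul_inv, le_div_iff₀ hε, mul_comm] at *
  exact key
end

section
/- Let p > 0, and for a ∈ (0,1) let T_a : [0,1] → [0,1] be defined by T_a(y) = a(1 − (1 − y/a)^{1/(p+1)}) for 0 ≤ y ≤ a and T_a(y) = a + (1−a)((y−a)/(1−a))^{1/(p+1)} for a ≤ y ≤ 1. Then there exist c > 0 and ε₀ ∈ (0, 1/2) such that for every ε ∈ (0, ε₀), setting a(ε) := 1/(2(1−ε)), one has T_{a(ε)}(1/2) = (1 − ε^{1/(p+1)})/(2(1−ε)), T_{1/2}(1/2) = 1/2, and sup_{y ∈ [0,1]} |T_{a(ε)}(y) − T_{1/2}(y)| ≥ |T_{a(ε)}(1/2) − 1/2| ≥ c·ε^{1/(p+1)}. -/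
/-- The transport map `T_a` of the sharpness example: on `[0,1]`,
`T_a(y) = a(1 - (1 - y/a)^{1/(p+1)})` for `y ≤ a` and
`a + (1-a)((y-a)/(1-a))^{1/(p+1)}` for `y ≥ a`. -/
noncomputable def Tfun (p a : ℝ) (y : ℝ) : ℝ :=
  if y ≤ a then a * (1 - (1 - y / a) ^ (1 / (p + 1)))
  else a + (1 - a) * ((y - a) / (1 - a)) ^ (1 / (p + 1))

lemma Tfun_mem (p a y : ℝ) (hp : 0 < p) (ha0 : 0 < a) (ha1 : a < 1)
    (hy0 : 0 ≤ y) (hy1 : y ≤ 1) : Tfun p a y ∈ Set.Icc (0 : ℝ) 1 := by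
  have hr : (0 : ℝ) ≤ 1 / (p + 1) := by positivity
  rw [Tfun]
  split_ifs with h
  · have hb0 : 0 ≤ 1 - y / a := by
      have : y / a ≤ 1 := (div_le_one ha0).2 h
      linarith
    have hb1 : 1 - y / a ≤ 1 := by
      have : 0 ≤ y / a := by positivity
      linarith
    have h0 : 0 ≤ (1 - y / a) ^ (1 / (p + 1)) := Real.rpow_nonneg hb0 _
    have h1 : (1 - y / a) ^ (1 / (p + 1)) ≤ 1 := Real.rpow_le_one hb0 hb1 hr
    constructor
    · nlinarith
    · nlinarith
  · push_neg at h
    have h1a : 0 < 1 - a := by linarith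
    have hb0 : 0 ≤ (y - a) / (1 - a) := div_nonneg (by linarith) h1a.le
    have hb1 : (y - a) / (1 - a) ≤ 1 := (div_le_one h1a).2 (by linarith)
    have h0 : 0 ≤ ((y - a) / (1 - a)) ^ (1 / (p + 1)) := Real.rpow_nonneg hb0 _
    have h1 : ((y - a) / (1 - a)) ^ (1 / (p + 1)) ≤ 1 := Real.rpow_le_one hb0 hb1 hr
    constructor
    · positivity
    · nlinarith

/-- For `p > 0` there are `c > 0` and `ε₀ ∈ (0, 1/2)` such that for all
`ε ∈ (0, ε₀)`, with `a(ε) = 1/(2(1-ε))`, one has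
`T_{a(ε)}(1/2) = (1 - ε^{1/(p+1)})/(2(1-ε))`, `T_{1/2}(1/2) = 1/2`, and
`sup_{y ∈ [0,1]} |T_{a(ε)}(y) - T_{1/2}(y)| ≥ |T_{a(ε)}(1/2) - 1/2| ≥ c·ε^{1/(p+1)}`. -/
theorem stmt4 (p : ℝ) (hp : 0 < p) :
    ∃ c > (0 : ℝ), ∃ ε₀ ∈ Set.Ioo (0 : ℝ) (1 / 2), ∀ ε ∈ Set.Ioo (0 : ℝ) ε₀,
      Tfun p (1 / (2 * (1 - ε))) (1 / 2) = (1 - ε ^ (1 / (p + 1))) / (2 * (1 - ε)) ∧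
      Tfun p (1 / 2) (1 / 2) = 1 / 2 ∧
      c * ε ^ (1 / (p + 1)) ≤ |Tfun p (1 / (2 * (1 - ε))) (1 / 2) - 1 / 2| ∧
      |Tfun p (1 / (2 * (1 - ε))) (1 / 2) - 1 / 2| ≤
        ⨆ y : Set.Icc (0 : ℝ) 1, |Tfun p (1 / (2 * (1 - ε))) y.1 - Tfun p (1 / 2) y.1| := by
  have hp1 : (0 : ℝ) < p + 1 := by linarith
  set ε₀ : ℝ := min (1/4) ((1/2 : ℝ) ^ ((p + 1) / p)) with hε₀def
  have hε₀pos : 0 < ε₀ := by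
    apply lt_min (by norm_num)
    positivity
  have hε₀le : ε₀ ≤ 1/4 := min_le_left _ _
  refine ⟨1/4, by norm_num, ε₀, ⟨hε₀pos, by linarith⟩, ?_⟩
  rintro ε ⟨hε0, hεε₀⟩
  have hε14 : ε < 1/4 := lt_of_lt_of_le hεε₀ hε₀le
  have h1ε : (0 : ℝ) < 1 - ε := by linarith
  set a : ℝ := 1 / (2 * (1 - ε)) with hadef
  have ha0 : 0 < a := by positivity
  have ha1 : a < 1 := by
    rw [hadef, div_lt_one (by positivity)]; linarith
  have hha : (1 : ℝ) / 2 ≤ a := by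
    rw [hadef, le_div_iff₀ (by positivity)]; nlinarith
  set t : ℝ := ε ^ (1 / (p + 1)) with htdef
  have ht0 : 0 < t := Real.rpow_pos_of_pos hε0 _
  -- first equality
  have key : (1 : ℝ) - (1/2) / a = ε := by
    rw [hadef]; field_simp; ring
  have eq1 : Tfun p a (1/2) = (1 - t) / (2 * (1 - ε)) := by
    rw [Tfun, if_pos hha, key, hadef, htdef]; ring
  -- second equality
  have eq2 : Tfun p (1/2) (1/2) = 1/2 := by
    rw [Tfun, if_pos le_rfl]
    rw [show (1:ℝ) - (1/2)/(1/2) = 0 by norm_num, Real.zero_rpow (by positivity)]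
    ring
  -- ε ≤ t / 2
  have hεt : ε ≤ t / 2 := by
    have hsplit : t * ε ^ (p / (p + 1)) = ε := by
      rw [htdef, ← Real.rpow_add hε0]
      rw [show 1 / (p + 1) + p / (p + 1) = 1 by rw [← add_div, show (1:ℝ)+p = p+1 from by ring, div_self hp1.ne']]
      exact Real.rpow_one ε
    have hle : ε ^ (p / (p + 1)) ≤ (1/2 : ℝ) := by
      have h1 : ε ^ (p / (p + 1)) ≤ ((1/2 : ℝ) ^ ((p + 1) / p)) ^ (p / (p + 1)) := by
        apply Real.rpow_le_rpow (le_of_lt hε0) _ (by positivity)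
        exact le_of_lt (lt_of_lt_of_le hεε₀ (min_le_right _ _))
      rwa [← Real.rpow_mul (by norm_num : (0:ℝ) ≤ 1/2),
        show (p + 1) / p * (p / (p + 1)) = 1 by field_simp,
        Real.rpow_one] at h1
    nlinarith
  -- the absolute value
  have habs : |Tfun p a (1/2) - 1/2| = (t - ε) / (2 * (1 - ε)) := by
    rw [eq1, show (1 - t) / (2 * (1 - ε)) - 1/2 = -((t - ε) / (2 * (1 - ε))) by
      field_simp; ring, abs_neg, abs_of_nonneg]
    apply div_nonneg _ (by positivity)
    linarith
  refine ⟨eq1.trans (by rw [htdef]), eq2, ?_, ?_⟩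
  · rw [habs, le_div_iff₀ (by positivity)]
    nlinarith
  · have hmem : (1/2 : ℝ) ∈ Set.Icc (0 : ℝ) 1 := by norm_num
    have hbdd : BddAbove (Set.range fun y : Set.Icc (0 : ℝ) 1 =>
        |Tfun p a y.1 - Tfun p (1/2) y.1|) := by
      refine ⟨2, ?_⟩
      rintro x ⟨y, rfl⟩
      have h1 := Tfun_mem p a y.1 hp ha0 ha1 y.2.1 y.2.2
      have h2 := Tfun_mem p (1/2) y.1 hp (by norm_num) (by norm_num) y.2.1 y.2.2
      rw [abs_le]
      constructor <;> [linarith [h1.1, h2.2]; linarith [h1.2, h2.1]]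
    have h := le_ciSup hbdd (⟨1/2, hmem⟩ : Set.Icc (0 : ℝ) 1)
    calc |Tfun p a (1/2) - 1/2| = |Tfun p a (1/2) - Tfun p (1/2) (1/2)| := by rw [eq2]
      _ ≤ _ := h
end

section
/- Let p > 1 and let η satisfy 1/(p+1) < η < 1. For a ∈ (0,1) define g_a : [0,1] → ℝ by g_a(x) = (p+1)a^{−p}(a−x)^p for 0 ≤ x ≤ a and g_a(x) = (p+1)(1−a)^{−p}(x−a)^p for a ≤ x ≤ 1, and define T_a : [0,1] → [0,1] by T_a(y) = a(1 − (1 − y/a)^{1/(p+1)}) for 0 ≤ y ≤ a and T_a(y) = a + (1−a)((y−a)/(1−a))^{1/(p+1)} for a ≤ y ≤ 1. Then for every C > 0 there exists a ∈ (0,1) such that sup_{y ∈ [0,1]} |T_a(y) − T_{1/2}(y)| > C·( sup_{x ∈ [0,1]} |g_a(x) − g_{1/2}(x)| )^η. In particular, no uniform η-Hölder stability estimate ‖T_a − T_{1/2}‖_{L^∞} ≤ C‖g_a − g_{1/2}‖_{L^∞}^η can hold when the target densities are allowed to vanish at a point. -/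
open Real Filter


/-- Lipschitz bound `u^p - v^p ≤ p (u - v)` on `[0,1]` for `p ≥ 1`. -/
lemma rpow_lip {p u v : ℝ} (hp : 1 ≤ p) (hv : 0 ≤ v) (hvu : v ≤ u) (hu : u ≤ 1) :
    u ^ p - v ^ p ≤ p * (u - v) := by
  rcases eq_or_lt_of_le (hv.trans hvu) with h | hupos
  · have hu0 : u = 0 := h.symm
    have hv0 : v = 0 := le_antisymm (hu0 ▸ hvu) hv
    simp [hu0, hv0, Real.zero_rpow (by linarith : p ≠ 0)]
  · set t := v / u with ht
    have ht0 : 0 ≤ t := div_nonneg hv hupos.le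
    have ht1 : t ≤ 1 := div_le_one_of_le₀ hvu hupos.le
    have hbern : 1 + p * (t - 1) ≤ t ^ p := by
      have := one_add_mul_self_le_rpow_one_add (by linarith : (-1:ℝ) ≤ t - 1) hp
      simpa using this
    have htu : t * u = v := div_mul_cancel₀ v hupos.ne'
    have hvp : v ^ p = t ^ p * u ^ p := by
      rw [← htu, Real.mul_rpow ht0 hupos.le]
    have hup : u ^ p ≤ u := by
      calc u ^ p ≤ u ^ (1:ℝ) := Real.rpow_le_rpow_of_exponent_ge hupos hu hp
      _ = u := Real.rpow_one u
    have hup0 : 0 ≤ u ^ p := Real.rpow_nonneg hupos.le p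
    have h1 : u ^ p * (1 + p * (t - 1)) ≤ u ^ p * t ^ p :=
      mul_le_mul_of_nonneg_left hbern hup0
    have h2 : u ^ p * (p * (1 - t)) ≤ u * (p * (1 - t)) :=
      mul_le_mul_of_nonneg_right hup (by nlinarith : 0 ≤ p * (1 - t))
    nlinarith [h1, h2]

/-- Rewrite `c^(-p) * b^p = (b/c)^p`. -/
lemma rpow_div_rw {p b c : ℝ} (hb : 0 ≤ b) (hc : 0 < c) :
    c ^ (-p) * b ^ p = (b / c) ^ p := by
  rw [Real.rpow_neg hc.le, Real.div_rpow hb hc.le, inv_mul_eq_div]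




/-- The target density `g_a` of the sharpness example: on `[0,1]`,
`g_a(x) = (p+1)a^{-p}(a-x)^p` for `x ≤ a` and `(p+1)(1-a)^{-p}(x-a)^p` for `x ≥ a`. -/
noncomputable def gfun (p a : ℝ) (x : ℝ) : ℝ :=
  if x ≤ a then (p + 1) * a ^ (-p) * (a - x) ^ p
  else (p + 1) * (1 - a) ^ (-p) * (x - a) ^ p

set_option maxHeartbeats 1000000 in
lemma gbound {p ε a x : ℝ} (hp : 1 < p) (hε0 : 0 < ε) (hε4 : ε < 1/4)
    (ha : a = 1/2 + ε) (hx0 : 0 ≤ x) (hx1 : x ≤ 1) :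
    |gfun p a x - gfun p (1/2) x| ≤ 4*p*(p+1)*ε := by
  have hp1 : (1:ℝ) ≤ p := hp.le
  have hp0 : (0:ℝ) ≤ p := by linarith
  have ha0 : 0 < a := by rw [ha]; linarith
  have ha1 : a < 1 := by rw [ha]; linarith
  have h2 : (0:ℝ) < 1/2 := by norm_num
  have h2' : (0:ℝ) < 1 - 1/2 := by norm_num
  by_cases hx12 : x ≤ 1/2
  · have hxa : x ≤ a := by rw [ha]; linarith
    rw [gfun, gfun, if_pos hxa, if_pos hx12, mul_assoc, mul_assoc,
        rpow_div_rw (by linarith : (0:ℝ) ≤ a - x) ha0,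
        rpow_div_rw (by linarith : (0:ℝ) ≤ 1/2 - x) h2]
    set u : ℝ := (a - x)/a with hu
    set v : ℝ := (1/2 - x)/(1/2) with hv
    have hv0 : 0 ≤ v := div_nonneg (by linarith) (by norm_num)
    have hvu : v ≤ u := by
      rw [hv, hu, div_le_div_iff₀ h2 ha0]; nlinarith
    have hu1 : u ≤ 1 := by rw [hu, div_le_one ha0]; linarith
    have key := rpow_lip hp1 hv0 hvu hu1
    have hmono : v ^ p ≤ u ^ p := Real.rpow_le_rpow hv0 hvu hp0
    have habs : |(p+1) * u ^ p - (p+1) * v ^ p| = (p+1) * (u ^ p - v ^ p) := by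
      rw [← mul_sub, abs_of_nonneg (by nlinarith)]
    rw [habs]
    have huv : u - v ≤ 4*ε := by
      have hxa' : 2*x - 4*ε ≤ x / a := by
        rw [le_div_iff₀ ha0, ha]
        nlinarith [mul_nonneg hε0.le (by linarith : (0:ℝ) ≤ 1 + 2*ε - x)]
      have hu' : u = 1 - x/a := by rw [hu]; field_simp
      have hv' : v = 1 - 2*x := by rw [hv]; ring
      rw [hu', hv']; linarith
    calc (p+1) * (u ^ p - v ^ p) ≤ (p+1) * (p * (u - v)) :=
          mul_le_mul_of_nonneg_left key (by linarith)
      _ ≤ (p+1) * (p * (4*ε)) := by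
          apply mul_le_mul_of_nonneg_left _ (by linarith : (0:ℝ) ≤ p + 1)
          exact mul_le_mul_of_nonneg_left huv hp0
      _ = 4*p*(p+1)*ε := by ring
  · push_neg at hx12
    by_cases hxa : x ≤ a
    · rw [gfun, gfun, if_pos hxa, if_neg (not_le.mpr hx12), mul_assoc, mul_assoc,
          rpow_div_rw (by linarith : (0:ℝ) ≤ a - x) ha0,
          rpow_div_rw (by linarith : (0:ℝ) ≤ x - 1/2) h2']
      set u : ℝ := (a - x)/a with hu
      set v : ℝ := (x - 1/2)/(1 - 1/2) with hv
      have hu0 : 0 ≤ u := div_nonneg (by linarith) ha0.le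
      have hv0 : 0 ≤ v := div_nonneg (by linarith) (by norm_num)
      have h2e : (0:ℝ) < 2*ε := by linarith
      have hple : (2*ε) ^ p ≤ 2*ε := by
        calc (2*ε) ^ p ≤ (2*ε) ^ (1:ℝ) :=
            Real.rpow_le_rpow_of_exponent_ge h2e (by linarith) hp1
        _ = 2*ε := Real.rpow_one _
      have hA : (p+1) * u ^ p ≤ (p+1) * (2*ε) := by
        have h1 : u ≤ 2*ε := by
          rw [hu, div_le_iff₀ ha0, ha]; nlinarith [sq_nonneg ε]
        have h2' : u ^ p ≤ (2*ε) ^ p := Real.rpow_le_rpow hu0 h1 hp0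
        exact mul_le_mul_of_nonneg_left (h2'.trans hple) (by linarith)
      have hB : (p+1) * v ^ p ≤ (p+1) * (2*ε) := by
        have h1 : v ≤ 2*ε := by
          rw [hv, div_le_iff₀ h2']
          have h22 : 2*ε*(1 - 1/2) = ε := by ring
          rw [h22]; linarith
        have h2' : v ^ p ≤ (2*ε) ^ p := Real.rpow_le_rpow hv0 h1 hp0
        exact mul_le_mul_of_nonneg_left (h2'.trans hple) (by linarith)
      have hA0 : 0 ≤ (p+1) * u ^ p := mul_nonneg (by linarith) (Real.rpow_nonneg hu0 p)
      have hB0 : 0 ≤ (p+1) * v ^ p := mul_nonneg (by linarith) (Real.rpow_nonneg hv0 p)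
      calc |(p+1) * u ^ p - (p+1) * v ^ p| ≤ |(p+1) * u ^ p| + |(p+1) * v ^ p| :=
            abs_sub _ _
        _ = (p+1) * u ^ p + (p+1) * v ^ p := by rw [abs_of_nonneg hA0, abs_of_nonneg hB0]
        _ ≤ (p+1) * (2*ε) + (p+1) * (2*ε) := add_le_add hA hB
        _ ≤ 4*p*(p+1)*ε := by
            nlinarith [mul_nonneg (mul_nonneg (sub_nonneg.2 hp1) (by linarith : (0:ℝ) ≤ p+1)) hε0.le]
    · push_neg at hxa
      have h1a : (0:ℝ) < 1 - a := by linarith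
      rw [gfun, gfun, if_neg (not_le.mpr hxa), if_neg (not_le.mpr hx12), mul_assoc, mul_assoc,
          rpow_div_rw (by linarith : (0:ℝ) ≤ x - a) h1a,
          rpow_div_rw (by linarith : (0:ℝ) ≤ x - 1/2) h2']
      set u : ℝ := (x - a)/(1 - a) with hu
      set v : ℝ := (x - 1/2)/(1 - 1/2) with hv
      have hu0 : 0 ≤ u := div_nonneg (by linarith) h1a.le
      have hv1 : v ≤ 1 := by rw [hv, div_le_one h2']; linarith
      have huv : u ≤ v := by
        rw [hu, hv, div_le_div_iff₀ h1a h2']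
        nlinarith [mul_nonneg hε0.le (by linarith : (0:ℝ) ≤ 1 - x)]
      have key := rpow_lip hp1 hu0 huv hv1
      have hmono : u ^ p ≤ v ^ p := Real.rpow_le_rpow hu0 huv hp0
      have habs : |(p+1) * u ^ p - (p+1) * v ^ p| = (p+1) * (v ^ p - u ^ p) := by
        rw [← mul_sub, abs_mul, abs_of_nonneg (by linarith : (0:ℝ) ≤ p+1),
            abs_of_nonpos (by linarith), neg_sub]
      rw [habs]
      have hvu4 : v - u ≤ 4*ε := by
        have h1 : 2*x - 1 - 4*ε ≤ (x - a)/(1 - a) := by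
          rw [le_div_iff₀ h1a]
          nlinarith [mul_nonneg hε0.le (by nlinarith : (0:ℝ) ≤ 2*x - 4*ε)]
        have hv' : v = 2*x - 1 := by rw [hv]; ring
        rw [hv', hu]; linarith
      calc (p+1) * (v ^ p - u ^ p) ≤ (p+1) * (p * (v - u)) :=
            mul_le_mul_of_nonneg_left key (by linarith)
        _ ≤ (p+1) * (p * (4*ε)) := by
            apply mul_le_mul_of_nonneg_left _ (by linarith : (0:ℝ) ≤ p + 1)
            exact mul_le_mul_of_nonneg_left hvu4 hp0
        _ = 4*p*(p+1)*ε := by ring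

lemma Tmem {p a y : ℝ} (hp : 1 < p) (ha0 : 0 < a) (ha1 : a < 1) (hy0 : 0 ≤ y) (hy1 : y ≤ 1) :
    Tfun p a y ∈ Set.Icc (0:ℝ) 1 := by
  have hq0 : (0:ℝ) ≤ 1/(p+1) := by positivity
  rw [Tfun]
  split_ifs with h
  · have h1 : 0 ≤ 1 - y/a := by
      rw [sub_nonneg, div_le_one ha0]; exact h
    have h2 : 1 - y/a ≤ 1 := by
      have : 0 ≤ y/a := div_nonneg hy0 ha0.le
      linarith
    have h3 : 0 ≤ (1 - y/a)^(1/(p+1)) := Real.rpow_nonneg h1 _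
    have h4 : (1 - y/a)^(1/(p+1)) ≤ 1 := Real.rpow_le_one h1 h2 hq0
    constructor
    · nlinarith
    · nlinarith
  · push_neg at h
    have h1a : (0:ℝ) < 1 - a := by linarith
    have h1 : 0 ≤ (y-a)/(1-a) := div_nonneg (by linarith) h1a.le
    have h2 : (y-a)/(1-a) ≤ 1 := by rw [div_le_one h1a]; linarith
    have h3 := Real.rpow_nonneg h1 (1/(p+1))
    have h4 := Real.rpow_le_one h1 h2 hq0
    constructor <;> nlinarith

set_option maxHeartbeats 1000000 in
/-- For `p > 1` and `1/(p+1) < η < 1`, no uniform `η`-Hölder stability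
estimate `‖T_a - T_{1/2}‖_{L^∞} ≤ C‖g_a - g_{1/2}‖_{L^∞}^η` can hold: for every `C > 0`
there is `a ∈ (0,1)` with
`sup_{y ∈ [0,1]} |T_a(y) - T_{1/2}(y)| > C·(sup_{x ∈ [0,1]} |g_a(x) - g_{1/2}(x)|)^η`. -/
theorem stmt6 (p η : ℝ) (hp : 1 < p) (hη₁ : 1 / (p + 1) < η) (hη₂ : η < 1) :
    ∀ C > (0 : ℝ), ∃ a ∈ Set.Ioo (0 : ℝ) 1,
      C * (⨆ x : Set.Icc (0 : ℝ) 1, |gfun p a x.1 - gfun p (1 / 2) x.1|) ^ η <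
        ⨆ y : Set.Icc (0 : ℝ) 1, |Tfun p a y.1 - Tfun p (1 / 2) y.1| := by
  intro C hC
  have hp1 : (1:ℝ) ≤ p := hp.le
  have hpp : (0:ℝ) < p + 1 := by linarith
  have hq0 : (0:ℝ) < 1/(p+1) := by positivity
  have hη0 : (0:ℝ) < η := lt_trans hq0 hη₁
  have hK0 : (0:ℝ) < 4*p*(p+1) := by nlinarith
  -- choose a small ε
  have t1 : Filter.Tendsto (fun ε : ℝ => ε^(η - 1/(p+1)))
      (nhdsWithin 0 (Set.Ioi 0)) (nhds 0) := by
    have hc : ContinuousAt (fun ε : ℝ => ε^(η - 1/(p+1))) 0 :=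
      Real.continuousAt_rpow_const 0 _ (Or.inr (by linarith))
    have h := hc.tendsto
    rw [Real.zero_rpow (by linarith : η - 1/(p+1) ≠ 0)] at h
    exact h.mono_left nhdsWithin_le_nhds
  have t2 : Filter.Tendsto (fun ε : ℝ => ε^(1 - 1/(p+1)))
      (nhdsWithin 0 (Set.Ioi 0)) (nhds 0) := by
    have hc : ContinuousAt (fun ε : ℝ => ε^(1 - 1/(p+1))) 0 :=
      Real.continuousAt_rpow_const 0 _ (Or.inr (by linarith))
    have h := hc.tendsto
    rw [Real.zero_rpow (by linarith : 1 - 1/(p+1) ≠ 0)] at h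
    exact h.mono_left nhdsWithin_le_nhds
  have hlim : Filter.Tendsto
      (fun ε : ℝ => C * (4*p*(p+1))^η * ε^(η - 1/(p+1)) + ε^(1 - 1/(p+1)))
      (nhdsWithin 0 (Set.Ioi 0)) (nhds 0) := by
    have h := (t1.const_mul (C * (4*p*(p+1))^η)).add t2
    simpa using h
  have hev := hlim.eventually_lt_const
    (by positivity : (0:ℝ) < (1/2) * 2^(1/(p+1)))
  have hsmall : ∀ᶠ ε in nhdsWithin 0 (Set.Ioi 0), ε ∈ Set.Ioo (0:ℝ) (1/4) :=
    Ioo_mem_nhdsGT_of_mem (by norm_num : (0:ℝ) ∈ Set.Ico (0:ℝ) (1/4:ℝ))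
  obtain ⟨ε, hεlt, hε0, hε4⟩ := (hev.and hsmall).exists
  -- the key numeric inequality
  have hεq : 0 < ε^(1/(p+1)) := Real.rpow_pos_of_pos hε0 _
  have hmul := mul_lt_mul_of_pos_right hεlt hεq
  have e1 : (4*p*(p+1)*ε)^η = (4*p*(p+1))^η * ε^η := Real.mul_rpow hK0.le hε0.le
  have e2 : (2*ε)^(1/(p+1)) = 2^(1/(p+1)) * ε^(1/(p+1)) :=
    Real.mul_rpow (by norm_num) hε0.le
  have l1 : ε^(η - 1/(p+1)) * ε^(1/(p+1)) = ε^η := by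
    rw [← Real.rpow_add hε0]
    have h : η - 1/(p+1) + 1/(p+1) = η := by ring
    rw [h]
  have l2 : ε^(1 - 1/(p+1)) * ε^(1/(p+1)) = ε := by
    rw [← Real.rpow_add hε0]
    have h : 1 - 1/(p+1) + 1/(p+1) = 1 := by ring
    rw [h, Real.rpow_one]
  have lhs_eq : (C * (4*p*(p+1))^η * ε^(η - 1/(p+1)) + ε^(1 - 1/(p+1))) * ε^(1/(p+1))
      = C * (4*p*(p+1)*ε)^η + ε := by
    rw [add_mul, mul_assoc (C * (4*p*(p+1))^η), l1, l2, e1]; ring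
  have rhs_eq : ((1/2) * 2^(1/(p+1))) * ε^(1/(p+1)) = (1/2) * (2*ε)^(1/(p+1)) := by
    rw [e2]; ring
  rw [lhs_eq, rhs_eq] at hmul
  -- the chosen a
  refine ⟨1/2 + ε, ⟨by linarith, by linarith⟩, ?_⟩
  haveI : Nonempty (Set.Icc (0:ℝ) 1) := ⟨⟨0, by norm_num⟩⟩
  -- supremum bounds for g
  have hbddG : BddAbove (Set.range fun x : Set.Icc (0:ℝ) 1 =>
      |gfun p (1/2 + ε) x.1 - gfun p (1/2) x.1|) := by
    refine ⟨4*p*(p+1)*ε, ?_⟩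
    rintro z ⟨x, rfl⟩
    exact gbound hp hε0 hε4 rfl x.2.1 x.2.2
  have hGle : (⨆ x : Set.Icc (0:ℝ) 1, |gfun p (1/2 + ε) x.1 - gfun p (1/2) x.1|)
      ≤ 4*p*(p+1)*ε :=
    ciSup_le fun x => gbound hp hε0 hε4 rfl x.2.1 x.2.2
  have hG0 : 0 ≤ ⨆ x : Set.Icc (0:ℝ) 1, |gfun p (1/2 + ε) x.1 - gfun p (1/2) x.1| :=
    (abs_nonneg _).trans (le_ciSup hbddG ⟨0, by norm_num⟩)
  -- supremum lower bound for T
  have hT1 : Tfun p (1/2 + ε) (1/2 + ε) = 1/2 + ε := by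
    rw [Tfun, if_pos le_rfl]
    have hd : (1/2 + ε)/(1/2 + ε) = 1 := div_self (by linarith)
    rw [hd, sub_self, Real.zero_rpow (ne_of_gt hq0), sub_zero, mul_one]
  have hT2 : Tfun p (1/2) (1/2 + ε) = 1/2 + (1/2) * (2*ε)^(1/(p+1)) := by
    rw [Tfun, if_neg (not_le.mpr (by linarith))]
    have hd : (1/2 + ε - 1/2)/(1 - 1/2) = 2*ε := by ring
    rw [hd]; norm_num
  have hTabs : (1/2) * (2*ε)^(1/(p+1)) - ε
      ≤ |Tfun p (1/2 + ε) (1/2 + ε) - Tfun p (1/2) (1/2 + ε)| := by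
    rw [hT1, hT2]
    have hrw : (1/2 + ε) - (1/2 + (1/2) * (2*ε)^(1/(p+1)))
        = ε - (1/2) * (2*ε)^(1/(p+1)) := by ring
    rw [hrw]
    calc (1/2) * (2*ε)^(1/(p+1)) - ε = -(ε - (1/2) * (2*ε)^(1/(p+1))) := by ring
      _ ≤ |ε - (1/2) * (2*ε)^(1/(p+1))| := neg_le_abs _
  have hbddT : BddAbove (Set.range fun y : Set.Icc (0:ℝ) 1 =>
      |Tfun p (1/2 + ε) y.1 - Tfun p (1/2) y.1|) := by
    refine ⟨1, ?_⟩
    rintro z ⟨y, rfl⟩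
    have h1 := Tmem hp (by linarith : (0:ℝ) < 1/2 + ε) (by linarith) y.2.1 y.2.2
    have h2 := Tmem hp (by norm_num : (0:ℝ) < 1/2) (by norm_num) y.2.1 y.2.2
    exact abs_sub_le_iff.mpr ⟨by linarith [h1.2, h2.1], by linarith [h2.2, h1.1]⟩
  have hTge : (1/2) * (2*ε)^(1/(p+1)) - ε
      ≤ ⨆ y : Set.Icc (0:ℝ) 1, |Tfun p (1/2 + ε) y.1 - Tfun p (1/2) y.1| :=
    hTabs.trans (le_ciSup hbddT ⟨1/2 + ε, ⟨by linarith, by linarith⟩⟩)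
  -- conclusion
  have hpow : (⨆ x : Set.Icc (0:ℝ) 1, |gfun p (1/2 + ε) x.1 - gfun p (1/2) x.1|) ^ η
      ≤ (4*p*(p+1)*ε) ^ η := Real.rpow_le_rpow hG0 hGle hη0.le
  have := mul_le_mul_of_nonneg_left hpow hC.le
  linarith
end

section
/- Let Ω ⊂ ℝ^d be open and bounded with closure K, let α ∈ (0,1), M > 0, and let f : [0,1] × K → ℝ satisfy: (1) for each t ∈ [0,1], the function f(t,·) is α-Hölder continuous on K; (2) for each x ∈ K, t ↦ f(t,x) is differentiable on (0,1), and there is a continuous function ∂f : [0,1] × K → ℝ which equals the t-derivative of f at every (t,x) ∈ (0,1) × K; (3) for every t ∈ (0,1), sup_{x ∈ K} |∂f(t,x)| + sup_{x ≠ y ∈ K} |∂f(t,x) − ∂f(t,y)|/|x − y|^α ≤ M. Then for every β ∈ (0, α) and every t ∈ (0,1), writing q_h(x) := (f(t+h, x) − f(t, x))/h − ∂f(t, x) for h ≠ 0 with t + h ∈ [0,1], one has lim_{h → 0} [ sup_{x ∈ K} |q_h(x)| + sup_{x ≠ y ∈ K} |q_h(x) − q_h(y)| / |x − y|^β ] =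 0; that is, t ↦ f(t,·) is Fréchet differentiable as a curve in the Hölder space C^{0,β}(K) with derivative ∂f(t,·). -/
/-- Mean value theorem tailored to an interval inside `(0,1)`. -/
lemma stmt11_mvt (g g' : ℝ → ℝ) (t h : ℝ) (ht0 : 0 < t) (ht1 : t < 1)
    (hth0 : 0 < t + h) (hth1 : t + h < 1) (hne : h ≠ 0)
    (hd : ∀ s ∈ Set.Ioo (0:ℝ) 1, HasDerivAt g (g' s) s) :
    ∃ ξ ∈ Set.Ioo (0:ℝ) 1, |ξ - t| < |h| ∧ (g (t + h) - g t) / h = g' ξ := by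
  rcases hne.lt_or_gt with hneg | hpos
  · have hlt : t + h < t := by linarith
    have hsub : Set.Icc (t+h) t ⊆ Set.Ioo (0:ℝ) 1 :=
      fun s hs => ⟨by linarith [hs.1], by linarith [hs.2]⟩
    obtain ⟨c, hc, hceq⟩ := exists_hasDerivAt_eq_slope g g' hlt
      (fun s hs => (hd s (hsub hs)).continuousAt.continuousWithinAt)
      (fun s hs => hd s (hsub (Set.Ioo_subset_Icc_self hs)))
    refine ⟨c, hsub (Set.Ioo_subset_Icc_self hc), ?_, ?_⟩
    · rw [abs_lt, abs_of_neg hneg]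
      exact ⟨by linarith [hc.1], by linarith [hc.2]⟩
    · rw [hceq, show t - (t + h) = -h by ring, div_neg, ← neg_div, neg_sub]
  · have hlt : t < t + h := by linarith
    have hsub : Set.Icc t (t+h) ⊆ Set.Ioo (0:ℝ) 1 :=
      fun s hs => ⟨by linarith [hs.1], by linarith [hs.2]⟩
    obtain ⟨c, hc, hceq⟩ := exists_hasDerivAt_eq_slope g g' hlt
      (fun s hs => (hd s (hsub hs)).continuousAt.continuousWithinAt)
      (fun s hs => hd s (hsub (Set.Ioo_subset_Icc_self hs)))
    refine ⟨c, hsub (Set.Ioo_subset_Icc_self hc), ?_, ?_⟩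
    · rw [abs_lt, abs_of_pos hpos]
      exact ⟨by linarith [hc.1], by linarith [hc.2]⟩
    · rw [hceq, show t + h - t = h by ring]

/-- Suppose `Ω ⊂ ℝ^d` is open and bounded with closure `K`,
`f : [0,1] × K → ℝ` is `α`-Hölder in `x` for each `t`, differentiable in `t` on `(0,1)`
with derivative `f'` continuous on `[0,1] × K` and with `C^{0,α}`-norm in `x` bounded by
`M` uniformly in `t`.  Then for every `β ∈ (0, α)` and `t ∈ (0,1)` the incremental
quotients `q_h = (f(t+h,·) - f(t,·))/h - f'(t,·)` tend to `0` in the `C^{0,β}(K)` norm as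
`h → 0`; that is, `t ↦ f(t,·)` is Fréchet differentiable as a curve in `C^{0,β}(K)` with
derivative `f'(t,·)`. -/
theorem stmt11 {d : ℕ} (Ω : Set (EuclideanSpace ℝ (Fin d))) (hΩ : IsOpen Ω)
    (hbd : Bornology.IsBounded Ω) (α M : ℝ) (hα : α ∈ Set.Ioo (0 : ℝ) 1) (hM : 0 < M)
    (f f' : ℝ → EuclideanSpace ℝ (Fin d) → ℝ)
    (hHolder : ∀ t ∈ Set.Icc (0 : ℝ) 1, ∃ C : ℝ, ∀ x ∈ closure Ω, ∀ y ∈ closure Ω,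
      |f t x - f t y| ≤ C * ‖x - y‖ ^ α)
    (hderiv : ∀ x ∈ closure Ω, ∀ t ∈ Set.Ioo (0 : ℝ) 1,
      HasDerivAt (fun s => f s x) (f' t x) t)
    (hcont : ContinuousOn (fun p : ℝ × EuclideanSpace ℝ (Fin d) => f' p.1 p.2)
      (Set.Icc (0 : ℝ) 1 ×ˢ closure Ω))
    (hboundsup : ∀ t ∈ Set.Ioo (0 : ℝ) 1, ∀ x ∈ closure Ω, |f' t x| ≤ M)
    (hboundhol : ∀ t ∈ Set.Ioo (0 : ℝ) 1, ∀ x ∈ closure Ω, ∀ y ∈ closure Ω,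
      |f' t x - f' t y| ≤ M * ‖x - y‖ ^ α) :
    ∀ β ∈ Set.Ioo (0 : ℝ) α, ∀ t ∈ Set.Ioo (0 : ℝ) 1, ∀ δ > (0 : ℝ), ∃ h₀ > (0 : ℝ),
      ∀ h : ℝ, h ≠ 0 → |h| < h₀ → t + h ∈ Set.Icc (0 : ℝ) 1 →
        (∀ x ∈ closure Ω, |(f (t + h) x - f t x) / h - f' t x| ≤ δ) ∧
        (∀ x ∈ closure Ω, ∀ y ∈ closure Ω,
          |((f (t + h) x - f t x) / h - f' t x) - ((f (t + h) y - f t y) / h - f' t y)| ≤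
            δ * ‖x - y‖ ^ β) := by
  intro β hβ t ht δ hδ
  obtain ⟨hβ0, hβα⟩ := hβ
  obtain ⟨ht0, ht1⟩ := ht
  obtain ⟨hα0, hα1⟩ := hα
  have hαβ : 0 < α - β := sub_pos.2 hβα
  have h2M : (0:ℝ) < 2 * M := by linarith
  -- parameters
  set r : ℝ := min 1 ((δ / (2 * M)) ^ (α - β)⁻¹) with hr_def
  have hr0 : 0 < r :=
    lt_min one_pos (Real.rpow_pos_of_pos (div_pos hδ h2M) _)
  have hrM : 2 * M * r ^ (α - β) ≤ δ := by
    have h1 : r ^ (α - β) ≤ ((δ / (2 * M)) ^ (α - β)⁻¹) ^ (α - β) :=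
      Real.rpow_le_rpow hr0.le (min_le_right _ _) hαβ.le
    rw [Real.rpow_inv_rpow (div_pos hδ h2M).le (ne_of_gt hαβ)] at h1
    calc 2 * M * r ^ (α - β) ≤ 2 * M * (δ / (2 * M)) :=
          mul_le_mul_of_nonneg_left h1 h2M.le
      _ = δ := by field_simp
  set ε : ℝ := min δ (δ / 2 * r ^ β) with hε_def
  have hε : 0 < ε :=
    lt_min hδ (mul_pos (by linarith) (Real.rpow_pos_of_pos hr0 _))
  -- uniform continuity of f' on the compact set
  have hK : IsCompact (closure Ω) :=
    Metric.isCompact_of_isClosed_isBounded isClosed_closure hbd.closure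
  have hS : IsCompact (Set.Icc (0:ℝ) 1 ×ˢ closure Ω) := isCompact_Icc.prod hK
  have hUC := hS.uniformContinuousOn_of_continuous hcont
  obtain ⟨h₁, hh₁, hUC⟩ := Metric.uniformContinuousOn_iff.1 hUC ε hε
  refine ⟨min h₁ (min t (1 - t)), lt_min hh₁ (lt_min ht0 (by linarith)), ?_⟩
  intro h hne hlt _
  have hlt1 : |h| < h₁ := hlt.trans_le (min_le_left _ _)
  have hltt : |h| < t := hlt.trans_le ((min_le_right _ _).trans (min_le_left _ _))
  have hlt1t : |h| < 1 - t := hlt.trans_le ((min_le_right _ _).trans (min_le_right _ _))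
  have hth0 : 0 < t + h := by
    have := neg_abs_le h; linarith
  have hth1 : t + h < 1 := by
    have := le_abs_self h; linarith
  -- sup bound
  have key : ∀ x ∈ closure Ω, |(f (t + h) x - f t x) / h - f' t x| ≤ ε := by
    intro x hx
    obtain ⟨ξ, hξI, hξd, hξeq⟩ := stmt11_mvt (fun s => f s x) (fun s => f' s x) t h
      ht0 ht1 hth0 hth1 hne (fun s hs => hderiv x hx s hs)
    rw [hξeq]
    have hd : dist (ξ, x) ((t, x) : ℝ × EuclideanSpace ℝ (Fin d)) < h₁ := by
      rw [Prod.dist_eq]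
      simp only [dist_self, Real.dist_eq]
      exact max_lt (hξd.trans hlt1) hh₁
    have := hUC (ξ, x) ⟨Set.Ioo_subset_Icc_self hξI, hx⟩
      (t, x) ⟨Set.Ioo_subset_Icc_self ⟨ht0, ht1⟩, hx⟩ hd
    rw [Real.dist_eq] at this
    exact this.le
  refine ⟨fun x hx => (key x hx).trans (min_le_left _ _), ?_⟩
  intro x hx y hy
  by_cases hxy : x = y
  · subst hxy
    simp [Real.zero_rpow (ne_of_gt hβ0)]
  have hnorm : 0 < ‖x - y‖ := norm_pos_iff.2 (sub_ne_zero.2 hxy)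
  have hrpowβ : (0:ℝ) ≤ ‖x - y‖ ^ β := Real.rpow_nonneg (norm_nonneg _) _
  -- two bounds on the difference
  have B1 : |((f (t + h) x - f t x) / h - f' t x) - ((f (t + h) y - f t y) / h - f' t y)|
      ≤ 2 * ε := by
    calc |((f (t + h) x - f t x) / h - f' t x) - ((f (t + h) y - f t y) / h - f' t y)|
        ≤ |(f (t + h) x - f t x) / h - f' t x| + |(f (t + h) y - f t y) / h - f' t y| :=
          abs_sub _ _
      _ ≤ ε + ε := add_le_add (key x hx) (key y hy)
      _ = 2 * ε := by ring
  have B2 : |((f (t + h) x - f t x) / h - f' t x) - ((f (t + h) y - f t y) / h - f' t y)|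
      ≤ 2 * M * ‖x - y‖ ^ α := by
    obtain ⟨ξ, hξI, hξd, hξeq⟩ := stmt11_mvt (fun s => f s x - f s y)
      (fun s => f' s x - f' s y) t h ht0 ht1 hth0 hth1 hne
      (fun s hs => (hderiv x hx s hs).sub (hderiv y hy s hs))
    have halg : ((f (t + h) x - f t x) / h - f' t x) - ((f (t + h) y - f t y) / h - f' t y)
        = ((f (t + h) x - f (t + h) y) - (f t x - f t y)) / h - (f' t x - f' t y) := by
      field_simp
      ring
    have heq2 : ((f (t + h) x - f (t + h) y) - (f t x - f t y)) / h = f' ξ x - f' ξ y := by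
      have := hξeq
      simpa using this
    rw [halg, heq2]
    calc |(f' ξ x - f' ξ y) - (f' t x - f' t y)|
        ≤ |f' ξ x - f' ξ y| + |f' t x - f' t y| := abs_sub _ _
      _ ≤ M * ‖x - y‖ ^ α + M * ‖x - y‖ ^ α :=
          add_le_add (hboundhol ξ hξI x hx y hy) (hboundhol t ⟨ht0, ht1⟩ x hx y hy)
      _ = 2 * M * ‖x - y‖ ^ α := by ring
  rcases le_or_gt ‖x - y‖ r with hcase | hcase
  · calc |((f (t + h) x - f t x) / h - f' t x) - ((f (t + h) y - f t y) / h - f' t y)|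
        ≤ 2 * M * ‖x - y‖ ^ α := B2
      _ = 2 * M * (‖x - y‖ ^ (α - β) * ‖x - y‖ ^ β) := by
          rw [← Real.rpow_add hnorm]; ring_nf
      _ ≤ 2 * M * (r ^ (α - β) * ‖x - y‖ ^ β) := by
          exact mul_le_mul_of_nonneg_left
            (mul_le_mul_of_nonneg_right
              (Real.rpow_le_rpow (norm_nonneg _) hcase hαβ.le) hrpowβ) h2M.le
      _ = (2 * M * r ^ (α - β)) * ‖x - y‖ ^ β := by ring
      _ ≤ δ * ‖x - y‖ ^ β := mul_le_mul_of_nonneg_right hrM hrpowβ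
  · calc |((f (t + h) x - f t x) / h - f' t x) - ((f (t + h) y - f t y) / h - f' t y)|
        ≤ 2 * ε := B1
      _ ≤ δ * r ^ β := by
          have : ε ≤ δ / 2 * r ^ β := min_le_right _ _
          linarith
      _ ≤ δ * ‖x - y‖ ^ β :=
          mul_le_mul_of_nonneg_left
            (Real.rpow_le_rpow hr0.le hcase.le hβ0.le) hδ.le
end

section
/- Let Ω ⊂ ℝ^d be a bounded convex open set, α ∈ (0,1], 0 < λ ≤ Λ, a > 0, M > 0. Let ζ : ℝ^d → ℝ be twice continuously differentiable with λ·I ≤ D²ζ(x) ≤ Λ·I for all x ∈ Ω and ‖D²ζ(x) − D²ζ(y)‖ ≤ M|x − y|^α for all x, y ∈ Ω (operator norm). Let f₀ : Ω → ℝ satisfy a ≤ f₀(x) ≤ M and |f₀(x) − f₀(y)| ≤ M|x − y|^α for all x, y ∈ Ω. Define h(x) := f₀(x) / det D²ζ(x). Then a·Λ^{−d} ≤ h(x) ≤ M·λ^{−d} for all x ∈ Ω, and there exists a constant C depending only on a, M, λ, Λ, α and d such that |h(x) − h(y)| ≤ C·‖∇ζ(x) − ∇ζ(y)‖^α for all x,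 y ∈ Ω. -/
open Matrix

/-- The Hessian matrix of second partial derivatives of a function on Euclidean space. -/
noncomputable def hessE {d : ℕ} (f : EuclideanSpace ℝ (Fin d) → ℝ)
    (x : EuclideanSpace ℝ (Fin d)) : Matrix (Fin d) (Fin d) ℝ :=
  Matrix.of fun i j =>
    fderiv ℝ (fun y => fderiv ℝ f y (EuclideanSpace.single j 1)) x (EuclideanSpace.single i 1)

section helpers
variable {d : ℕ} {A : Matrix (Fin d) (Fin d) ℝ} {lam Λ : ℝ}

lemma quad_lower (hl : (A - lam • (1 : Matrix (Fin d) (Fin d) ℝ)).PosSemidef)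
    (v : Fin d → ℝ) : lam * (v ⬝ᵥ v) ≤ v ⬝ᵥ (A *ᵥ v) := by
  have h := hl.dotProduct_mulVec_nonneg v
  simp only [star_trivial, sub_mulVec, smul_mulVec, one_mulVec, dotProduct_sub,
    dotProduct_smul, smul_eq_mul] at h
  linarith

lemma quad_upper (hu : ((Λ : ℝ) • (1 : Matrix (Fin d) (Fin d) ℝ) - A).PosSemidef)
    (v : Fin d → ℝ) : v ⬝ᵥ (A *ᵥ v) ≤ Λ * (v ⬝ᵥ v) := by
  have h := hu.dotProduct_mulVec_nonneg v
  simp only [star_trivial, sub_mulVec, smul_mulVec, one_mulVec, dotProduct_sub,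
    dotProduct_smul, smul_eq_mul] at h
  linarith

lemma herm_of_bounds (hl : (A - lam • (1 : Matrix (Fin d) (Fin d) ℝ)).PosSemidef) :
    A.IsHermitian := by
  have := hl.1
  unfold Matrix.IsHermitian at *
  have h1 : (lam • (1 : Matrix (Fin d) (Fin d) ℝ)).conjTranspose = lam • 1 := by
    simp
  rw [conjTranspose_sub, h1, sub_eq_sub_iff_sub_eq_sub] at this
  simpa [sub_eq_zero] using this

lemma eig_bounds (hl : (A - lam • (1 : Matrix (Fin d) (Fin d) ℝ)).PosSemidef)
    (hu : ((Λ : ℝ) • (1 : Matrix (Fin d) (Fin d) ℝ) - A).PosSemidef)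
    (hA : A.IsHermitian) (i : Fin d) :
    lam ≤ hA.eigenvalues i ∧ hA.eigenvalues i ≤ Λ := by
  set v : EuclideanSpace ℝ (Fin d) := hA.eigenvectorBasis i with hv
  have hnorm : ‖v‖ = 1 := hA.eigenvectorBasis.orthonormal.1 i
  have hvv : (v : Fin d → ℝ) ⬝ᵥ (v : Fin d → ℝ) = 1 := by
    have : (v : Fin d → ℝ) ⬝ᵥ (v : Fin d → ℝ) = @inner ℝ _ _ v v := by
      simp only [dotProduct, PiLp.inner_apply, RCLike.inner_apply, conj_trivial]
    rw [this, real_inner_self_eq_norm_sq, hnorm]; norm_num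
  have hmul : A *ᵥ (v : Fin d → ℝ) = hA.eigenvalues i • (v : Fin d → ℝ) :=
    hA.mulVec_eigenvectorBasis i
  have h1 := quad_lower hl (v : Fin d → ℝ)
  have h2 := quad_upper hu (v : Fin d → ℝ)
  rw [hmul, dotProduct_smul, smul_eq_mul, hvv, mul_one] at h1 h2
  constructor <;> linarith

lemma det_bounds (hlam : 0 < lam)
    (hl : (A - lam • (1 : Matrix (Fin d) (Fin d) ℝ)).PosSemidef)
    (hu : ((Λ : ℝ) • (1 : Matrix (Fin d) (Fin d) ℝ) - A).PosSemidef) :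
    lam ^ d ≤ A.det ∧ A.det ≤ Λ ^ d := by
  have hA := herm_of_bounds hl
  have hdet : A.det = ∏ i, hA.eigenvalues i := hA.det_eq_prod_eigenvalues
  have hb := eig_bounds hl hu hA
  constructor
  · rw [hdet]
    calc lam ^ d = ∏ _i : Fin d, lam := by simp
    _ ≤ ∏ i, hA.eigenvalues i :=
        Finset.prod_le_prod (fun i _ => le_of_lt hlam) (fun i _ => (hb i).1)
  · rw [hdet]
    calc ∏ i, hA.eigenvalues i ≤ ∏ _i : Fin d, Λ :=
        Finset.prod_le_prod (fun i _ => le_trans hlam.le (hb i).1) (fun i _ => (hb i).2)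
    _ = Λ ^ d := by simp

lemma entry_bounds (hlam : 0 < lam)
    (hl : (A - lam • (1 : Matrix (Fin d) (Fin d) ℝ)).PosSemidef)
    (hu : ((Λ : ℝ) • (1 : Matrix (Fin d) (Fin d) ℝ) - A).PosSemidef)
    (i j : Fin d) : |A i j| ≤ Λ := by
  have hA := herm_of_bounds hl
  have hsym : A j i = A i j := by
    have := congrFun (congrFun hA j) i
    simpa using this.symm
  have hdiag : ∀ k : Fin d, lam ≤ A k k ∧ A k k ≤ Λ := by
    intro k
    have h1 := quad_lower hl (Pi.single k 1)
    have h2 := quad_upper hu (Pi.single k 1)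
    simp [single_dotProduct, dotProduct_single] at h1 h2
    constructor <;> linarith
  have hΛlam : lam ≤ Λ := le_trans (hdiag i).1 (hdiag i).2
  by_cases hij : i = j
  · subst hij
    rw [abs_le]
    exact ⟨by linarith [(hdiag i).1], (hdiag i).2⟩
  · have h1 := quad_upper hu (Pi.single i 1 + Pi.single j 1)
    have h2 := quad_upper hu (Pi.single i 1 - Pi.single j 1)
    rw [mulVec_add, add_dotProduct, add_dotProduct, dotProduct_add, dotProduct_add] at h1
    rw [mulVec_sub, sub_dotProduct, sub_dotProduct, dotProduct_sub, dotProduct_sub] at h2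
    simp only [mulVec_single, single_dotProduct, dotProduct_single, mul_one, one_mul] at h1 h2
    simp only [Pi.add_apply, Pi.sub_apply, Pi.single_apply, if_pos rfl, hij,
      Ne.symm hij, if_false] at h1 h2
    norm_num at h1 h2
    rw [hsym] at h1 h2
    have di := (hdiag i).1; have dj := (hdiag j).1
    rw [abs_le]
    constructor <;> nlinarith

lemma prod_sub_prod_bound {ι : Type*} [DecidableEq ι] (s : Finset ι) (f g : ι → ℝ) (K ε : ℝ)
    (hK : 1 ≤ K) (hε : 0 ≤ ε) (hf : ∀ i ∈ s, |f i| ≤ K) (hg : ∀ i ∈ s, |g i| ≤ K)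
    (hd : ∀ i ∈ s, |f i - g i| ≤ ε) :
    |∏ i ∈ s, f i - ∏ i ∈ s, g i| ≤ s.card * K ^ s.card * ε := by
  induction s using Finset.induction_on with
  | empty => simp
  | @insert i s his ih =>
    rw [Finset.prod_insert his, Finset.prod_insert his, Finset.card_insert_of_notMem his]
    have hKpos : (0:ℝ) < K := lt_of_lt_of_le one_pos hK
    have hKn : (0:ℝ) ≤ K ^ s.card := le_of_lt (pow_pos hKpos _)
    have hgi : |∏ j ∈ s, g j| ≤ K ^ s.card := by
      rw [Finset.abs_prod]
      calc ∏ j ∈ s, |g j| ≤ ∏ _j ∈ s, K :=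
            Finset.prod_le_prod (fun j _ => abs_nonneg _)
              (fun j hj => hg j (Finset.mem_insert_of_mem hj))
        _ = K ^ s.card := by rw [Finset.prod_const]
    have key : f i * ∏ j ∈ s, f j - g i * ∏ j ∈ s, g j
        = f i * (∏ j ∈ s, f j - ∏ j ∈ s, g j) + (f i - g i) * ∏ j ∈ s, g j := by ring
    rw [key]
    have ih' := ih (fun j hj => hf j (Finset.mem_insert_of_mem hj))
      (fun j hj => hg j (Finset.mem_insert_of_mem hj))
      (fun j hj => hd j (Finset.mem_insert_of_mem hj))
    have hfi := hf i (Finset.mem_insert_self i s)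
    have hdi := hd i (Finset.mem_insert_self i s)
    calc |f i * (∏ j ∈ s, f j - ∏ j ∈ s, g j) + (f i - g i) * ∏ j ∈ s, g j|
        ≤ |f i| * |∏ j ∈ s, f j - ∏ j ∈ s, g j| + |f i - g i| * |∏ j ∈ s, g j| := by
          refine le_trans (abs_add_le _ _) ?_
          rw [abs_mul, abs_mul]
      _ ≤ K * (s.card * K ^ s.card * ε) + ε * K ^ s.card := by
          gcongr <;> exact abs_nonneg _
      _ = (s.card : ℝ) * K ^ (s.card + 1) * ε + K ^ s.card * ε := by
          rw [pow_succ]; ring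
      _ ≤ (s.card : ℝ) * K ^ (s.card + 1) * ε + K ^ (s.card + 1) * ε := by
          have h1 : K ^ s.card ≤ K ^ (s.card + 1) := by
            calc K ^ s.card = K ^ s.card * 1 := by ring
              _ ≤ K ^ s.card * K := by gcongr
              _ = K ^ (s.card + 1) := by ring
          gcongr
      _ = ((s.card + 1 : ℕ) : ℝ) * K ^ (s.card + 1) * ε := by push_cast; ring

lemma det_sub_det_bound (A B : Matrix (Fin d) (Fin d) ℝ) (K ε : ℝ)
    (hK : 1 ≤ K) (hε : 0 ≤ ε) (hA : ∀ i j, |A i j| ≤ K) (hB : ∀ i j, |B i j| ≤ K)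
    (hAB : ∀ i j, |A i j - B i j| ≤ ε) :
    |A.det - B.det| ≤ (d.factorial : ℝ) * (d * K ^ d * ε) := by
  rw [Matrix.det_apply, Matrix.det_apply, ← Finset.sum_sub_distrib]
  have hterm : ∀ σ : Equiv.Perm (Fin d),
      |Equiv.Perm.sign σ • ∏ i, A (σ i) i - Equiv.Perm.sign σ • ∏ i, B (σ i) i|
        ≤ d * K ^ d * ε := by
    intro σ
    have hb : |(∏ i, A (σ i) i) - ∏ i, B (σ i) i| ≤ d * K ^ d * ε := by
      have := prod_sub_prod_bound (Finset.univ : Finset (Fin d))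
        (fun i => A (σ i) i) (fun i => B (σ i) i) K ε hK hε
        (fun i _ => hA _ _) (fun i _ => hB _ _) (fun i _ => hAB _ _)
      simpa using this
    rcases Int.units_eq_one_or (Equiv.Perm.sign σ) with h | h <;>
      rw [h] <;> [skip; rw [abs_sub_comm]] <;> simpa [neg_add_eq_sub, abs_sub_comm] using hb
  calc |∑ σ : Equiv.Perm (Fin d),
        (Equiv.Perm.sign σ • ∏ i, A (σ i) i - Equiv.Perm.sign σ • ∏ i, B (σ i) i)|
      ≤ ∑ σ : Equiv.Perm (Fin d), |Equiv.Perm.sign σ • ∏ i, A (σ i) i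
          - Equiv.Perm.sign σ • ∏ i, B (σ i) i| := Finset.abs_sum_le_sum_abs _ _
    _ ≤ ∑ _σ : Equiv.Perm (Fin d), (d * K ^ d * ε) :=
        Finset.sum_le_sum (fun σ _ => hterm σ)
    _ = (d.factorial : ℝ) * (d * K ^ d * ε) := by
        rw [Finset.sum_const, Finset.card_univ, Fintype.card_perm, Fintype.card_fin,
          nsmul_eq_mul]

end helpers

section calc3
variable {d : ℕ} {ζ : EuclideanSpace ℝ (Fin d) → ℝ}

lemma euclid_sum_single (u : EuclideanSpace ℝ (Fin d)) :
    ∑ i, u i • EuclideanSpace.single i (1:ℝ) = u := by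
  have h := (EuclideanSpace.basisFun (Fin d) ℝ).sum_repr u
  simpa [EuclideanSpace.basisFun_repr, EuclideanSpace.basisFun_apply] using h

lemma coord_le_norm (w : EuclideanSpace ℝ (Fin d)) (i : Fin d) : |w i| ≤ ‖w‖ := by
  have h := abs_real_inner_le_norm (EuclideanSpace.single i (1:ℝ)) w
  rw [EuclideanSpace.inner_single_left, EuclideanSpace.norm_single] at h
  simpa using h

lemma hessE_apply (hζ : ContDiff ℝ 2 ζ) (x : EuclideanSpace ℝ (Fin d)) (i j : Fin d) :
    hessE ζ x i j
      = (fderiv ℝ (fderiv ℝ ζ) x (EuclideanSpace.single i 1)) (EuclideanSpace.single j 1) := by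
  have hF : DifferentiableAt ℝ (fderiv ℝ ζ) x :=
    ((hζ.fderiv_right (m := 1) (by norm_num)).differentiable one_ne_zero) x
  show fderiv ℝ (fun y => fderiv ℝ ζ y (EuclideanSpace.single j 1)) x (EuclideanSpace.single i 1) = _
  rw [fderiv_clm_apply hF (differentiableAt_const _)]
  simp

lemma bilin_dot (hζ : ContDiff ℝ 2 ζ) (x : EuclideanSpace ℝ (Fin d))
    (u : EuclideanSpace ℝ (Fin d)) :
    (fderiv ℝ (fderiv ℝ ζ) x u) u
      = ((EuclideanSpace.equiv (Fin d) ℝ) u) ⬝ᵥ (hessE ζ x *ᵥ (EuclideanSpace.equiv (Fin d) ℝ) u) := by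
  set B := fderiv ℝ (fderiv ℝ ζ) x with hB
  have key : ∀ i, (B (EuclideanSpace.single i 1)) u = ∑ j, u j * hessE ζ x i j := by
    intro i
    conv_lhs => rw [← euclid_sum_single u]
    rw [_root_.map_sum (B (EuclideanSpace.single i 1))
      (fun j => u j • EuclideanSpace.single j (1:ℝ)) Finset.univ]
    refine Finset.sum_congr rfl (fun j _ => ?_)
    rw [(B (EuclideanSpace.single i 1)).map_smul, hessE_apply hζ x i j, smul_eq_mul]
  calc (B u) u = (B (∑ i, u i • EuclideanSpace.single i (1:ℝ))) u := by
        rw [euclid_sum_single u]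
    _ = ∑ i, u i * ∑ j, u j * hessE ζ x i j := by
        rw [_root_.map_sum B (fun i => u i • EuclideanSpace.single i (1:ℝ)) Finset.univ,
          ContinuousLinearMap.sum_apply]
        refine Finset.sum_congr rfl (fun i _ => ?_)
        rw [B.map_smul, ContinuousLinearMap.smul_apply, smul_eq_mul, key i]
    _ = ((EuclideanSpace.equiv (Fin d) ℝ) u) ⬝ᵥ (hessE ζ x *ᵥ (EuclideanSpace.equiv (Fin d) ℝ) u) := by
        have he : (EuclideanSpace.equiv (Fin d) ℝ) u = fun k => u k := rfl
        simp only [dotProduct, Matrix.mulVec, dotProduct, he, Finset.mul_sum]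
        exact Finset.sum_congr rfl (fun i _ => Finset.sum_congr rfl (fun j _ => by ring))

lemma fderiv_eq_inner_gradient (hζ : ContDiff ℝ 2 ζ) (z u : EuclideanSpace ℝ (Fin d)) :
    fderiv ℝ ζ z u = @inner ℝ _ _ (gradient ζ z) u := by
  have hd : DifferentiableAt ℝ ζ z := (hζ.differentiable (by norm_num)) z
  have hg := hd.hasGradientAt
  rw [hasGradientAt_iff_hasFDerivAt] at hg
  rw [hg.fderiv]
  exact InnerProductSpace.toDual_apply_apply

lemma grad_mono (hζ : ContDiff ℝ 2 ζ) {Ω : Set (EuclideanSpace ℝ (Fin d))}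
    (hconv : Convex ℝ Ω) {lam : ℝ}
    (hl : ∀ z ∈ Ω, (hessE ζ z - lam • (1 : Matrix (Fin d) (Fin d) ℝ)).PosSemidef)
    {x y : EuclideanSpace ℝ (Fin d)} (hx : x ∈ Ω) (hy : y ∈ Ω) :
    lam * ‖x - y‖ ≤ ‖gradient ζ x - gradient ζ y‖ := by
  set u := x - y with hu
  by_cases h0 : u = 0
  · rw [h0, norm_zero, mul_zero]
    positivity
  have hF : Differentiable ℝ (fderiv ℝ ζ) :=
    (hζ.fderiv_right (m := 1) (by norm_num)).differentiable one_ne_zero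
  set ψ : ℝ → ℝ := fun t => fderiv ℝ ζ (y + t • u) u with hψ
  have hder : ∀ t : ℝ, HasDerivAt ψ ((fderiv ℝ (fderiv ℝ ζ) (y + t • u) u) u) t := by
    intro t
    have hline : HasDerivAt (fun s : ℝ => y + s • u) u t := by
      simpa using ((hasDerivAt_id t).smul_const u).const_add y
    have hcomp : HasDerivAt (fun s : ℝ => fderiv ℝ ζ (y + s • u))
        (fderiv ℝ (fderiv ℝ ζ) (y + t • u) u) t :=
      (hF (y + t • u)).hasFDerivAt.comp_hasDerivAt t hline
    simpa using hcomp.clm_apply (hasDerivAt_const t u)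
  obtain ⟨c, hc, hceq⟩ := exists_hasDerivAt_eq_slope ψ
    (fun t => (fderiv ℝ (fderiv ℝ ζ) (y + t • u) u) u) zero_lt_one
    (Continuous.continuousOn (by
      have : Differentiable ℝ ψ := fun t => (hder t).differentiableAt
      exact this.continuous))
    (fun t _ => hder t)
  have hmem : y + c • u ∈ Ω := by
    have key := hconv hy hx (show (0:ℝ) ≤ 1 - c by linarith [hc.2])
      (le_of_lt hc.1) (by ring)
    have heq : y + c • u = (1 - c) • y + c • x := by
      rw [hu, smul_sub, sub_smul, one_smul]; abel
    rw [heq]; exact key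
  have hquad := quad_lower (hl _ hmem) ((EuclideanSpace.equiv (Fin d) ℝ) u)
  rw [← bilin_dot hζ] at hquad
  have hdot : ((EuclideanSpace.equiv (Fin d) ℝ) u) ⬝ᵥ ((EuclideanSpace.equiv (Fin d) ℝ) u)
      = ‖u‖ ^ 2 := by
    rw [← real_inner_self_eq_norm_sq]
    simp only [dotProduct, PiLp.inner_apply, RCLike.inner_apply, conj_trivial]
    rfl
  rw [hdot] at hquad
  have hslope : (fderiv ℝ (fderiv ℝ ζ) (y + c • u) u) u = ψ 1 - ψ 0 := by
    rw [hceq]; norm_num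
  have hψ1 : ψ 1 = @inner ℝ _ _ (gradient ζ x) u := by
    have h1 : y + (1:ℝ) • u = x := by rw [hu, one_smul]; abel
    show fderiv ℝ ζ (y + (1:ℝ) • u) u = _
    rw [h1, fderiv_eq_inner_gradient hζ]
  have hψ0 : ψ 0 = @inner ℝ _ _ (gradient ζ y) u := by
    have h1 : y + (0:ℝ) • u = y := by rw [zero_smul, add_zero]
    show fderiv ℝ ζ (y + (0:ℝ) • u) u = _
    rw [h1, fderiv_eq_inner_gradient hζ]
  have hinner : lam * ‖u‖ ^ 2 ≤ @inner ℝ _ _ (gradient ζ x - gradient ζ y) u := by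
    rw [inner_sub_left]
    calc lam * ‖u‖ ^ 2 ≤ (fderiv ℝ (fderiv ℝ ζ) (y + c • u) u) u := hquad
      _ = ψ 1 - ψ 0 := hslope
      _ = _ := by rw [hψ1, hψ0]
  have hCS : @inner ℝ _ _ (gradient ζ x - gradient ζ y) u
      ≤ ‖gradient ζ x - gradient ζ y‖ * ‖u‖ := real_inner_le_norm _ _
  have hupos : 0 < ‖u‖ := norm_pos_iff.mpr h0
  have : lam * ‖u‖ * ‖u‖ ≤ ‖gradient ζ x - gradient ζ y‖ * ‖u‖ := by
    calc lam * ‖u‖ * ‖u‖ = lam * ‖u‖ ^ 2 := by ring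
      _ ≤ _ := le_trans hinner hCS
  exact le_of_mul_le_mul_right this hupos

end calc3

/-- **geodesic interpolation preserves Hölder regularity and
non-degeneracy.**  There is a constant `C > 0` depending only on `a, M, λ, Λ, α, d` such
that: for every bounded convex open `Ω ⊂ ℝ^d`, every `C²` function `ζ` with
`λ·I ≤ D²ζ ≤ Λ·I` on `Ω` and `‖D²ζ(x) - D²ζ(y)‖_{op} ≤ M|x-y|^α`, and every `f₀` with
`a ≤ f₀ ≤ M` which is `α`-Hölder with constant `M`, the function
`h = f₀ / det D²ζ` satisfies `a·Λ^{-d} ≤ h ≤ M·λ^{-d}` on `Ω` and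
`|h(x) - h(y)| ≤ C·‖∇ζ(x) - ∇ζ(y)‖^α` for all `x, y ∈ Ω`. -/
theorem stmt13 (d : ℕ) (α a M lam Λ : ℝ) (hα : α ∈ Set.Ioc (0 : ℝ) 1)
    (ha : 0 < a) (hlam : 0 < lam) (hlamΛ : lam ≤ Λ) (haM : a ≤ M) :
    ∃ C > (0 : ℝ),
      ∀ Ω : Set (EuclideanSpace ℝ (Fin d)), IsOpen Ω → Convex ℝ Ω → Bornology.IsBounded Ω →
      ∀ ζ f₀ : EuclideanSpace ℝ (Fin d) → ℝ, ContDiff ℝ 2 ζ →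
        (∀ x ∈ Ω, (hessE ζ x - lam • (1 : Matrix (Fin d) (Fin d) ℝ)).PosSemidef) →
        (∀ x ∈ Ω, (Λ • (1 : Matrix (Fin d) (Fin d) ℝ) - hessE ζ x).PosSemidef) →
        (∀ x ∈ Ω, ∀ y ∈ Ω, ∀ v : EuclideanSpace ℝ (Fin d),
          ‖(EuclideanSpace.equiv (Fin d) ℝ).symm
              ((hessE ζ x - hessE ζ y) *ᵥ (EuclideanSpace.equiv (Fin d) ℝ) v)‖ ≤
            M * ‖x - y‖ ^ α * ‖v‖) →
        (∀ x ∈ Ω, a ≤ f₀ x) → (∀ x ∈ Ω, f₀ x ≤ M) →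
        (∀ x ∈ Ω, ∀ y ∈ Ω, |f₀ x - f₀ y| ≤ M * ‖x - y‖ ^ α) →
        ∀ x ∈ Ω,
          (a / Λ ^ d ≤ f₀ x / (hessE ζ x).det ∧ f₀ x / (hessE ζ x).det ≤ M / lam ^ d) ∧
          ∀ y ∈ Ω, |f₀ x / (hessE ζ x).det - f₀ y / (hessE ζ y).det| ≤
            C * ‖gradient ζ x - gradient ζ y‖ ^ α := by
  obtain ⟨hα0, hα1⟩ := hα
  have hM : 0 < M := lt_of_lt_of_le ha haM
  have hΛ : 0 < Λ := lt_of_lt_of_le hlam hlamΛ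
  have hlamd : 0 < lam ^ d := pow_pos hlam d
  set Kp : ℝ := max Λ 1 with hKp
  have hKp1 : (1:ℝ) ≤ Kp := le_max_right Λ 1
  set Kd : ℝ := (d.factorial : ℝ) * (d * Kp ^ d) with hKd
  have hKd0 : 0 ≤ Kd := by
    apply mul_nonneg (Nat.cast_nonneg _)
    exact mul_nonneg (Nat.cast_nonneg _) (pow_nonneg (le_trans zero_le_one hKp1) d)
  set C₀ : ℝ := M / lam ^ d + M * (Kd * M) / (lam ^ d * lam ^ d) with hC₀
  have hC₀0 : 0 ≤ C₀ := by
    apply add_nonneg (div_nonneg hM.le hlamd.le)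
    exact div_nonneg (mul_nonneg hM.le (mul_nonneg hKd0 hM.le))
      (mul_nonneg hlamd.le hlamd.le)
  have hinvα : (0:ℝ) ≤ lam⁻¹ ^ α := Real.rpow_nonneg (inv_nonneg.mpr hlam.le) α
  refine ⟨C₀ * lam⁻¹ ^ α + 1, by positivity, ?_⟩
  intro Ω hopen hconv hbdd ζ f₀ hζ hl hu hhold hfa hfM hfhold x hx
  have hdetb : ∀ z ∈ Ω, lam ^ d ≤ (hessE ζ z).det ∧ (hessE ζ z).det ≤ Λ ^ d :=
    fun z hz => det_bounds hlam (hl z hz) (hu z hz)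
  have hDx : 0 < (hessE ζ x).det := lt_of_lt_of_le hlamd (hdetb x hx).1
  constructor
  · constructor
    · exact div_le_div₀ (le_trans ha.le (hfa x hx)) (hfa x hx |>.trans' ha.le |> fun _ => hfa x hx) hDx (hdetb x hx).2
    · exact div_le_div₀ hM.le (hfM x hx) hlamd (hdetb x hx).1
  · intro y hy
    have hDy : 0 < (hessE ζ y).det := lt_of_lt_of_le hlamd (hdetb y hy).1
    set N : ℝ := ‖x - y‖ with hN
    have hNα : 0 ≤ N ^ α := Real.rpow_nonneg (norm_nonneg _) α
    have hεnn : 0 ≤ M * N ^ α := mul_nonneg hM.le hNα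
    -- entry bounds
    have hAx : ∀ i j, |hessE ζ x i j| ≤ Kp :=
      fun i j => le_trans (entry_bounds hlam (hl x hx) (hu x hx) i j) (le_max_left Λ 1)
    have hAy : ∀ i j, |hessE ζ y i j| ≤ Kp :=
      fun i j => le_trans (entry_bounds hlam (hl y hy) (hu y hy) i j) (le_max_left Λ 1)
    -- entry differences
    have hdiff : ∀ i j, |hessE ζ x i j - hessE ζ y i j| ≤ M * N ^ α := by
      intro i j
      have h := hhold x hx y hy (EuclideanSpace.single j 1)
      rw [EuclideanSpace.norm_single, norm_one, mul_one] at h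
      have hc := coord_le_norm ((EuclideanSpace.equiv (Fin d) ℝ).symm
        ((hessE ζ x - hessE ζ y) *ᵥ (EuclideanSpace.equiv (Fin d) ℝ)
          (EuclideanSpace.single j 1))) i
      have heval : ((EuclideanSpace.equiv (Fin d) ℝ).symm
          ((hessE ζ x - hessE ζ y) *ᵥ (EuclideanSpace.equiv (Fin d) ℝ)
            (EuclideanSpace.single j 1))) i = hessE ζ x i j - hessE ζ y i j := by
        show ((hessE ζ x - hessE ζ y) *ᵥ (Pi.single j 1)) i = _
        rw [mulVec_single]
        simp [Matrix.sub_apply]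
      rw [heval] at hc
      exact le_trans hc h
    -- determinant difference
    have hDod : |(hessE ζ x).det - (hessE ζ y).det| ≤ Kd * (M * N ^ α) := by
      have h := det_sub_det_bound (hessE ζ x) (hessE ζ y) Kp (M * N ^ α) hKp1 hεnn hAx hAy hdiff
      calc |(hessE ζ x).det - (hessE ζ y).det|
          ≤ (d.factorial : ℝ) * (d * Kp ^ d * (M * N ^ α)) := h
        _ = Kd * (M * N ^ α) := by rw [hKd]; ring
    -- main algebraic bound
    have hmain : |f₀ x / (hessE ζ x).det - f₀ y / (hessE ζ y).det| ≤ C₀ * N ^ α := by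
      have hid : f₀ x / (hessE ζ x).det - f₀ y / (hessE ζ y).det
          = (f₀ x - f₀ y) / (hessE ζ x).det
            + f₀ y * ((hessE ζ y).det - (hessE ζ x).det) / ((hessE ζ x).det * (hessE ζ y).det) := by
        field_simp
        ring
      rw [hid]
      have ht1 : |(f₀ x - f₀ y) / (hessE ζ x).det| ≤ M * N ^ α / lam ^ d := by
        rw [abs_div, abs_of_pos hDx]
        exact div_le_div₀ hεnn (hfhold x hx y hy) hlamd (hdetb x hx).1
      have ht2 : |f₀ y * ((hessE ζ y).det - (hessE ζ x).det) / ((hessE ζ x).det * (hessE ζ y).det)|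
          ≤ M * (Kd * (M * N ^ α)) / (lam ^ d * lam ^ d) := by
        rw [abs_div, abs_of_pos (mul_pos hDx hDy), abs_mul]
        apply div_le_div₀ (mul_nonneg hM.le (mul_nonneg hKd0 hεnn))
        · apply mul_le_mul _ _ (abs_nonneg _) hM.le
          · rw [abs_of_pos (lt_of_lt_of_le ha (hfa y hy))]
            exact hfM y hy
          · rw [abs_sub_comm]; exact hDod
        · exact mul_pos hlamd hlamd
        · exact mul_le_mul (hdetb x hx).1 (hdetb y hy).1 hlamd.le hDx.le
      calc |(f₀ x - f₀ y) / (hessE ζ x).det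
            + f₀ y * ((hessE ζ y).det - (hessE ζ x).det) / ((hessE ζ x).det * (hessE ζ y).det)|
          ≤ |(f₀ x - f₀ y) / (hessE ζ x).det|
            + |f₀ y * ((hessE ζ y).det - (hessE ζ x).det)
                / ((hessE ζ x).det * (hessE ζ y).det)| := abs_add_le _ _
        _ ≤ M * N ^ α / lam ^ d + M * (Kd * (M * N ^ α)) / (lam ^ d * lam ^ d) :=
            add_le_add ht1 ht2
        _ = C₀ * N ^ α := by rw [hC₀]; ring
    -- gradient lower bound
    set G : ℝ := ‖gradient ζ x - gradient ζ y‖ with hG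
    have hGnn : 0 ≤ G := norm_nonneg _
    have hGα : 0 ≤ G ^ α := Real.rpow_nonneg hGnn α
    have hNle : N ≤ lam⁻¹ * G := by
      have h := grad_mono hζ hconv hl hx hy
      calc N = lam⁻¹ * (lam * N) := by field_simp
        _ ≤ lam⁻¹ * G := mul_le_mul_of_nonneg_left h (inv_nonneg.mpr hlam.le)
    have hNαle : N ^ α ≤ lam⁻¹ ^ α * G ^ α := by
      calc N ^ α ≤ (lam⁻¹ * G) ^ α :=
          Real.rpow_le_rpow (norm_nonneg _) hNle hα0.le
        _ = lam⁻¹ ^ α * G ^ α := Real.mul_rpow (inv_nonneg.mpr hlam.le) hGnn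
    calc |f₀ x / (hessE ζ x).det - f₀ y / (hessE ζ y).det| ≤ C₀ * N ^ α := hmain
      _ ≤ C₀ * (lam⁻¹ ^ α * G ^ α) := mul_le_mul_of_nonneg_left hNαle hC₀0
      _ = (C₀ * lam⁻¹ ^ α) * G ^ α := by ring
      _ ≤ (C₀ * lam⁻¹ ^ α + 1) * G ^ α := by nlinarith
end
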